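/- Any two nonempty connected acyclic simple graphs in which every vertex has countably infinite degree are isomorphic as graphs. -/

import Mathlib

open SimpleGraph Walk

namespace TreesCB

/-- The canonical countably-branching tree on `List ℕ`. -/
def T : SimpleGraph (List ℕ) where
  Adj a b := (∃ n, b = n :: a) ∨ (∃ n, a = n :: b)
  symm := ⟨fun a b h => h.symm⟩
  loopless :=
    ⟨by rintro a (⟨n, h⟩ | ⟨n, h⟩) <;> exact List.cons_ne_self n a h.symm⟩

lemma T_adj (a b : List ℕ) : T.Adj a b ↔ (∃ n, b = n :: a) ∨ (∃ n, a = n :: b) :=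
  Iff.rfl

variable {V : Type*} {G : SimpleGraph V}

lemma _root_.SimpleGraph.Walk.getVert_cons_one {u v w : V} (q : G.Walk v w) (h : G.Adj u v) :
    (Walk.cons h q).getVert 1 = v := by
  rw [Walk.getVert_cons_succ, Walk.getVert_zero]

section

variable (r : V) (e : V → V → ℕ → V)

/-- vertex and its parent determined by a list of natural numbers. -/
def vert : List ℕ → V × V
  | [] => (r, r)
  | n :: l => (e (vert l).1 (vert l).2 n, (vert l).1)

/-- The vertex. -/
def f (l : List ℕ) : V := (vert r e l).1

/-- The parent. -/
def par (l : List ℕ) : V := (vert r e l).2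

@[simp] lemma f_nil : f r e [] = r := rfl
@[simp] lemma par_nil : par r e [] = r := rfl
@[simp] lemma f_cons (n : ℕ) (l : List ℕ) :
    f r e (n :: l) = e (f r e l) (par r e l) n := rfl
@[simp] lemma par_cons (n : ℕ) (l : List ℕ) : par r e (n :: l) = f r e l := rfl

lemma adj_f (he : ∀ v p n, e v p n ∈ G.neighborSet v \ {p}) (n : ℕ) (l : List ℕ) :
    G.Adj (f r e l) (f r e (n :: l)) :=
  (he (f r e l) (par r e l) n).1

lemma f_ne_par (he : ∀ v p n, e v p n ∈ G.neighborSet v \ {p}) (n : ℕ) (l : List ℕ) :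
    f r e (n :: l) ≠ par r e l :=
  (he (f r e l) (par r e l) n).2

/-- The walk from `f l` back to the root. -/
def wlk (he : ∀ v p n, e v p n ∈ G.neighborSet v \ {p}) :
    (l : List ℕ) → G.Walk (f r e l) r
  | [] => Walk.nil
  | n :: l => Walk.cons (adj_f r e he n l).symm (wlk he l)

variable (he : ∀ v p n, e v p n ∈ G.neighborSet v \ {p})

@[simp] lemma wlk_nil : wlk r e he [] = Walk.nil := rfl
@[simp] lemma wlk_cons (n : ℕ) (l : List ℕ) :
    wlk r e he (n :: l) = Walk.cons (adj_f r e he n l).symm (wlk r e he l) := rfl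

@[simp] lemma length_wlk : ∀ l : List ℕ, (wlk r e he l).length = l.length
  | [] => rfl
  | n :: l => by rw [wlk_cons, Walk.length_cons, length_wlk l, List.length_cons]

lemma getVert_one_wlk : ∀ l : List ℕ, (wlk r e he l).getVert 1 = par r e l
  | [] => rfl
  | n :: l => by
      rw [wlk_cons, Walk.getVert_cons_one, par_cons]

lemma par_mem_support : ∀ l : List ℕ, par r e l ∈ (wlk r e he l).support
  | [] => by simp
  | n :: l => by
      rw [wlk_cons, Walk.support_cons, par_cons]
      exact List.mem_cons_of_mem _ (Walk.start_mem_support _)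

end

/-- In a path, an edge incident to the first vertex must be the first edge. -/
lemma head_edge {x : V} : ∀ {u v : V} (p : G.Walk u v), p.IsPath →
    s(x, u) ∈ p.edges → p.getVert 1 = x := by
  intro u v p
  induction p with
  | nil => simp
  | @cons u w v h q ih =>
    intro hp hm
    rw [Walk.edges_cons, List.mem_cons] at hm
    rcases hm with hm | hm
    · rw [Sym2.eq_iff] at hm
      rcases hm with ⟨rfl, rfl⟩ | ⟨rfl, -⟩
      · exact absurd rfl h.ne
      · exact Walk.getVert_cons_one _ _
    · exact absurd (Walk.snd_mem_support_of_mem_edges q hm)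
        ((Walk.cons_isPath_iff _ _).mp hp).2

/-- The first edge of a nontrivial walk is in its edges. -/
lemma first_edge_mem : ∀ {u v : V} (p : G.Walk u v), 0 < p.length →
    s(u, p.getVert 1) ∈ p.edges := by
  intro u v p
  cases p with
  | nil => simp
  | cons h q =>
    intro _
    rw [Walk.edges_cons, Walk.getVert_cons_one]
    exact List.mem_cons_self

/-- If the second vertex of a path equals its endpoint, the path has length ≤ 1. -/
lemma length_le_one_of_getVert_one_eq_end {u v : V} {p : G.Walk u v}
    (hp : p.IsPath) (h : p.getVert 1 = v) : p.length ≤ 1 := by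
  cases p with
  | nil => simp
  | @cons u w v hadj q =>
    rw [Walk.getVert_cons_one] at h
    subst h
    have : q = Walk.nil := by
      rw [← Walk.isPath_iff_eq_nil]
      exact hp.of_cons
    subst this
    simp

section

variable (r : V) (e : V → V → ℕ → V)

lemma isPath_wlk (hG : G.IsAcyclic)
    (he : ∀ v p n, e v p n ∈ G.neighborSet v \ {p}) :
    ∀ l : List ℕ, (wlk r e he l).IsPath := by
  intro l
  induction l with
  | nil => simp
  | cons n l ih =>
    rw [wlk_cons, Walk.cons_isPath_iff]
    refine ⟨ih, fun hmem => ?_⟩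
    classical
    set p := (wlk r e he l).takeUntil _ hmem with hp
    have hpPath : p.IsPath := ih.takeUntil hmem
    rcases Nat.lt_or_ge p.length 2 with h2 | h2
    · interval_cases hlen : p.length
      · have : f r e l = f r e (n :: l) := Walk.eq_of_length_eq_zero hlen
        exact absurd this (adj_f r e he n l).ne
      · -- p is a single edge, so f (n::l) is the second vertex of wlk l, i.e. par l
        have hfe := first_edge_mem p (by omega)
        rw [p.getVert_of_length_le (by omega)] at hfe
        have hedge : s(f r e (n :: l), f r e l) ∈ (wlk r e he l).edges := by
          rw [Sym2.eq_swap]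
          exact (wlk r e he l).edges_takeUntil_subset hmem hfe
        have := head_edge (wlk r e he l) ih hedge
        rw [getVert_one_wlk] at this
        exact f_ne_par r e he n l this.symm
    · have hne : s(f r e (n :: l), f r e l) ∉ p.edges := by
        intro hmem'
        have h1 := head_edge p hpPath hmem'
        have := length_le_one_of_getVert_one_eq_end hpPath h1
        omega
      have hcyc : (Walk.cons (adj_f r e he n l).symm p).IsCycle :=
        SimpleGraph.Path.cons_isCycle ⟨p, hpPath⟩ (adj_f r e he n l).symm hne
      exact hG _ hcyc

end

end TreesCB

namespace TreesCB

open SimpleGraph Walk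

variable {V : Type*} {G : SimpleGraph V}

lemma getVert_copy' {u v u' v' : V} (p : G.Walk u v) (hu : u = u') (hv : v = v')
    (i : ℕ) : (p.copy hu hv).getVert i = p.getVert i := by
  subst hu; subst hv; rfl

lemma support_copy' {u v u' v' : V} (p : G.Walk u v) (hu : u = u') (hv : v = v') :
    (p.copy hu hv).support = p.support := by
  subst hu; subst hv; rfl

lemma _root_.SimpleGraph.Walk.IsPath.copy' {u v u' v' : V} {p : G.Walk u v} (h : p.IsPath)
    (hu : u = u') (hv : v = v') : (p.copy hu hv).IsPath := by
  subst hu; subst hv; exact h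

section

variable (r : V) (e : V → V → ℕ → V)

lemma f_inj (hG : G.IsAcyclic)
    (he : ∀ v p n, e v p n ∈ G.neighborSet v \ {p})
    (heInj : ∀ v p, Function.Injective (e v p)) :
    ∀ l l' : List ℕ, f r e l = f r e l' → l = l' := by
  intro l
  induction l with
  | nil =>
    intro l' h
    cases l' with
    | nil => rfl
    | cons n' t' =>
      exfalso
      -- wlk (n'::t') is a path from f (n'::t') = f [] = r to r, nonnil
      have hpath := isPath_wlk r e hG he (n' :: t')
      have w2 : G.Walk (f r e []) r := (wlk r e he (n' :: t')).copy h.symm rfl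
      have hw2 : ((wlk r e he (n' :: t')).copy h.symm rfl).IsPath := hpath.copy' _ _
      have huniq := isAcyclic_iff_path_unique.mp hG
        (⟨wlk r e he [], isPath_wlk r e hG he []⟩ : G.Path _ r)
        ⟨(wlk r e he (n' :: t')).copy h.symm rfl, hw2⟩
      have hlen := congrArg (fun q : G.Path _ r => q.1.length) huniq
      simp only [Walk.length_copy, length_wlk] at hlen
      simp at hlen
  | cons n t ih =>
    intro l' h
    cases l' with
    | nil =>
      exfalso
      have hpath := isPath_wlk r e hG he (n :: t)
      have hw2 : ((wlk r e he []).copy h.symm rfl).IsPath :=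
        (isPath_wlk r e hG he []).copy' _ _
      have huniq := isAcyclic_iff_path_unique.mp hG
        (⟨wlk r e he (n :: t), hpath⟩ : G.Path _ r)
        ⟨(wlk r e he []).copy h.symm rfl, hw2⟩
      have hlen := congrArg (fun q : G.Path _ r => q.1.length) huniq
      simp only [Walk.length_copy, length_wlk] at hlen
      simp at hlen
    | cons n' t' =>
      have hw2 : ((wlk r e he (n' :: t')).copy h.symm rfl).IsPath :=
        (isPath_wlk r e hG he (n' :: t')).copy' _ _
      have huniq := isAcyclic_iff_path_unique.mp hG
        (⟨wlk r e he (n :: t), isPath_wlk r e hG he (n :: t)⟩ : G.Path _ r)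
        ⟨(wlk r e he (n' :: t')).copy h.symm rfl, hw2⟩
      have hwalk : wlk r e he (n :: t) = (wlk r e he (n' :: t')).copy h.symm rfl :=
        congrArg Subtype.val huniq
      have hgv := congrArg (fun q : G.Walk _ r => q.getVert 1) hwalk
      simp only [getVert_copy', getVert_one_wlk, par_cons] at hgv
      -- hgv : f r e t = f r e t'
      have ht : t = t' := ih t' hgv
      subst ht
      -- now n = n'
      have : e (f r e t) (par r e t) n = e (f r e t) (par r e t) n' := by
        simpa using h
      rw [heInj _ _ this]

lemma f_surj (hG : G.IsAcyclic) (hconn : G.Connected)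
    (he : ∀ v p n, e v p n ∈ G.neighborSet v \ {p})
    (heSurj : ∀ v p w, w ∈ G.neighborSet v \ {p} → ∃ n, e v p n = w) :
    ∀ v : V, ∃ l, f r e l = v := by
  classical
  have key : ∀ (v w : V) (p : G.Walk v w), p.IsPath → r = w → ∃ l, f r e l = v := by
    intro v w p
    induction p with
    | nil => exact fun _ h => ⟨[], h⟩
    | @cons v u w hadj q ih =>
      intro hp hw
      subst hw
      obtain ⟨l, hl⟩ := ih hp.of_cons rfl
      -- q = wlk l (as paths from u to r)
      have hw2 : ((wlk r e he l).copy hl rfl).IsPath := (isPath_wlk r e hG he l).copy' _ _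
      have huniq := isAcyclic_iff_path_unique.mp hG
        (⟨q, hp.of_cons⟩ : G.Path u r) ⟨(wlk r e he l).copy hl rfl, hw2⟩
      have hq : q = (wlk r e he l).copy hl rfl := congrArg Subtype.val huniq
      have hvns : v ∉ q.support := ((Walk.cons_isPath_iff _ _).mp hp).2
      have hvpar : v ≠ par r e l := by
        intro hpar
        apply hvns
        rw [hq, support_copy']
        rw [hpar]
        exact par_mem_support r e he l
      have hvmem : v ∈ G.neighborSet (f r e l) \ {par r e l} := by
        constructor
        · rw [hl]; exact hadj.symm
        · simpa using hvpar
      obtain ⟨n, hn⟩ := heSurj _ _ _ hvmem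
      exact ⟨n :: l, hn⟩
  intro v
  obtain ⟨p⟩ := (hconn v r)
  exact key v r p.toPath p.toPath.2 rfl

lemma adj_iff (hG : G.IsAcyclic)
    (he : ∀ v p n, e v p n ∈ G.neighborSet v \ {p})
    (heInj : ∀ v p, Function.Injective (e v p))
    (heSurj : ∀ v p w, w ∈ G.neighborSet v \ {p} → ∃ n, e v p n = w)
    (a b : List ℕ) : T.Adj a b ↔ G.Adj (f r e a) (f r e b) := by
  constructor
  · rintro (⟨n, rfl⟩ | ⟨n, rfl⟩)
    · exact adj_f r e he n a
    · exact (adj_f r e he n b).symm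
  · intro hAdj
    by_cases hb : f r e b = par r e a
    · cases a with
      | nil =>
        exfalso
        rw [par_nil, ← f_nil r e] at hb
        have hb' : b = [] := f_inj r e hG he heInj b [] hb
        subst hb'
        exact hAdj.ne rfl
      | cons k t =>
        rw [par_cons] at hb
        have : b = t := f_inj r e hG he heInj b t hb
        subst this
        exact Or.inr ⟨k, rfl⟩
    · have hmem : f r e b ∈ G.neighborSet (f r e a) \ {par r e a} :=
        ⟨hAdj, by simpa using hb⟩
      obtain ⟨n, hn⟩ := heSurj _ _ _ hmem
      have : f r e (n :: a) = f r e b := hn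
      have hb' : b = n :: a := (f_inj r e hG he heInj _ _ this).symm
      exact Or.inl ⟨n, hb'⟩

end

end TreesCB

namespace TreesCB

open SimpleGraph

variable {V : Type*}

theorem exists_iso (G : SimpleGraph V) [Nonempty V]
    (hconn : G.Connected) (hacyc : G.IsAcyclic)
    (hdeg : ∀ v : V, Countable (G.neighborSet v) ∧ Infinite (G.neighborSet v)) :
    Nonempty (T ≃g G) := by
  classical
  obtain ⟨r⟩ := ‹Nonempty V›
  have hE : ∀ v p : V, Nonempty (ℕ ≃ ↥(G.neighborSet v \ {p})) := by
    intro v p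
    have hc : (G.neighborSet v).Countable := by
      have := (hdeg v).1
      exact Set.countable_coe_iff.mp this
    have hi : (G.neighborSet v).Infinite := by
      have := (hdeg v).2
      exact Set.infinite_coe_iff.mp this
    have hc2 : Countable ↥(G.neighborSet v \ {p}) :=
      (hc.mono Set.diff_subset).to_subtype
    have hi2 : Infinite ↥(G.neighborSet v \ {p}) :=
      Set.infinite_coe_iff.mpr (hi.diff (Set.finite_singleton p))
    have := Classical.choice (nonempty_denumerable ↥(G.neighborSet v \ {p}))
    exact ⟨(@Denumerable.eqv _ this).symm⟩
  let E : ∀ v p : V, ℕ ≃ ↥(G.neighborSet v \ {p}) := fun v p => Classical.choice (hE v p)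
  let e : V → V → ℕ → V := fun v p n => (E v p n : V)
  have he : ∀ v p n, e v p n ∈ G.neighborSet v \ {p} := fun v p n => (E v p n).2
  have heInj : ∀ v p, Function.Injective (e v p) := by
    intro v p a b hab
    exact (E v p).injective (Subtype.val_injective hab)
  have heSurj : ∀ v p w, w ∈ G.neighborSet v \ {p} → ∃ n, e v p n = w := by
    intro v p w hw
    exact ⟨(E v p).symm ⟨w, hw⟩, by simp [e]⟩
  have hbij : Function.Bijective (f r e) :=
    ⟨fun a b h => f_inj r e hacyc he heInj a b h,
     fun v => f_surj r e hacyc hconn he heSurj v⟩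
  exact ⟨⟨Equiv.ofBijective _ hbij, fun {a b} =>
    ((adj_iff r e hacyc he heInj heSurj a b)).symm⟩⟩

end TreesCB

/-- Any two nonempty connected acyclic simple graphs in which every vertex has
countably infinite degree are isomorphic. -/
theorem trees_countably_branching_isomorphic {V V' : Type*}
    (G : SimpleGraph V) (G' : SimpleGraph V') [Nonempty V] [Nonempty V']
    (hconn : G.Connected) (hacyc : G.IsAcyclic)
    (hdeg : ∀ v : V, Countable (G.neighborSet v) ∧ Infinite (G.neighborSet v))
    (hconn' : G'.Connected) (hacyc' : G'.IsAcyclic)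
    (hdeg' : ∀ v : V', Countable (G'.neighborSet v) ∧ Infinite (G'.neighborSet v)) :
    Nonempty (G ≃g G') := by
  obtain ⟨i⟩ := TreesCB.exists_iso G hconn hacyc hdeg
  obtain ⟨i'⟩ := TreesCB.exists_iso G' hconn' hacyc' hdeg'
  exact ⟨i.symm.trans i'⟩
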